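/- Let X be a set and let E ⊆ F be subsets of X × X, both symmetric (E = E⁻¹ and F = F⁻¹), and suppose F has bounded geometry: there is M ∈ ℕ such that for every x ∈ X, the set {y ∈ X : (x,y) ∈ F} has at most M elements. Then there exist finitely many elementary antisymmetric sets E₁, …, Eₙ ⊆ X × X such that F is the disjoint union F = E ⊔ diag(F∖E) ⊔ (E₁ ⊔ E₁⁻¹) ⊔ ⋯ ⊔ (Eₙ ⊔ Eₙ⁻¹), where diag(F∖E) = {(x,x) : (x,x) ∈ F and (x,x) ∉ E}. -/

import Mathlib

/-- The inverse of a relation `E ⊆ X × X`: `E⁻¹ = {(x,y) : (y,x) ∈ E}`. -/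
def relInv {X : Type*} (E : Set (X × X)) : Set (X × X) := {p | (p.2, p.1) ∈ E}

/-- `G ⊆ X × X` is elementary if it is the graph of a partial bijection. -/
def IsElementary {X : Type*} (G : Set (X × X)) : Prop :=
  (∀ p ∈ G, ∀ q ∈ G, p.1 = q.1 → p.2 = q.2) ∧
  (∀ p ∈ G, ∀ q ∈ G, p.2 = q.2 → p.1 = q.1)

/-- An elementary set is antisymmetric if the set of first coordinates is disjoint from the
set of second coordinates. -/
def IsAntisymElementary {X : Type*} (G : Set (X × X)) : Prop :=
  IsElementary G ∧ Disjoint (Prod.fst '' G) (Prod.snd '' G)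

open SimpleGraph

lemma greedy_coloring {V : Type*} [Fintype V] (G : SimpleGraph V) (n : ℕ) (hn : 0 < n)
    (h : ∀ v, (G.neighborSet v).ncard < n) : G.Colorable n := by
  classical
  suffices h' : ∀ s : Finset V, ∃ c : V → Fin n, ∀ v ∈ s, ∀ w ∈ s, G.Adj v w → c v ≠ c w by
    obtain ⟨c, hc⟩ := h' Finset.univ
    exact ⟨Coloring.mk c fun hadj => hc _ (Finset.mem_univ _) _ (Finset.mem_univ _) hadj⟩
  intro s
  induction s using Finset.induction with
  | empty => exact ⟨fun _ => ⟨0, hn⟩, by simp⟩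
  | @insert a s ha ih =>
    obtain ⟨c, hc⟩ := ih
    set t : Finset (Fin n) := (s.filter (fun w => G.Adj a w)).image c with ht
    have hcard : t.card < n := by
      calc t.card ≤ (s.filter (fun w => G.Adj a w)).card := Finset.card_image_le
        _ = ((s.filter (fun w => G.Adj a w) : Finset V) : Set V).ncard := by
            rw [Set.ncard_coe_finset]
        _ ≤ (G.neighborSet a).ncard := by
            apply Set.ncard_le_ncard _ (Set.toFinite _)
            intro w hw
            simp only [Finset.coe_filter, Set.mem_setOf_eq] at hw
            exact hw.2
        _ < n := h a
    have hex : ∃ i : Fin n, i ∉ t := by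
      by_contra hcon
      push_neg at hcon
      have : t = Finset.univ := Finset.eq_univ_iff_forall.mpr hcon
      rw [this, Finset.card_univ, Fintype.card_fin] at hcard
      exact lt_irrefl _ hcard
    obtain ⟨i, hi⟩ := hex
    refine ⟨Function.update c a i, ?_⟩
    intro v hv w hw hadj
    have hupd : ∀ x ∈ s, Function.update c a i x = c x := by
      intro x hx
      exact Function.update_of_ne (by rintro rfl; exact ha hx) _ _
    rcases Finset.mem_insert.mp hv with rfl | hv'
    · have hw' : w ∈ s := by
        rcases Finset.mem_insert.mp hw with rfl | hw'
        · exact absurd hadj G.irrefl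
        · exact hw'
      rw [Function.update_self, hupd w hw']
      intro heq
      exact hi (heq ▸ Finset.mem_image_of_mem c (Finset.mem_filter.mpr ⟨hw', hadj⟩))
    · rcases Finset.mem_insert.mp hw with rfl | hw'
      · rw [Function.update_self, hupd v hv']
        intro heq
        exact hi (heq ▸ Finset.mem_image_of_mem c (Finset.mem_filter.mpr ⟨hv', hadj.symm⟩))
      · rw [hupd v hv', hupd w hw']
        exact hc v hv' w hw' hadj

/-- If `E ⊆ F` are symmetric subsets of `X × X` and `F` has bounded
geometry, then there are elementary antisymmetric sets `E₁, …, Eₙ` such that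
`F = E ⊔ diag(F ∖ E) ⊔ (E₁ ⊔ E₁⁻¹) ⊔ ⋯ ⊔ (Eₙ ⊔ Eₙ⁻¹)` is a disjoint union. -/
theorem stmt_1 {X : Type*} (E F : Set (X × X)) (hEF : E ⊆ F)
    (hEsymm : relInv E = E) (hFsymm : relInv F = F)
    (M : ℕ)
    (hbg : ∀ x : X, ({y | (x, y) ∈ F}).Finite ∧ ({y | (x, y) ∈ F}).ncard ≤ M) :
    ∃ (n : ℕ) (Es : Fin n → Set (X × X)),
      (∀ i, IsAntisymElementary (Es i)) ∧
      F = E ∪ {p ∈ F \ E | p.1 = p.2} ∪ (⋃ i, Es i ∪ relInv (Es i)) ∧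
      Disjoint E {p ∈ F \ E | p.1 = p.2} ∧
      (∀ i, Disjoint E (Es i ∪ relInv (Es i))) ∧
      (∀ i, Disjoint {p ∈ F \ E | p.1 = p.2} (Es i ∪ relInv (Es i))) ∧
      (∀ i, Disjoint (Es i) (relInv (Es i))) ∧
      (∀ i j, i ≠ j → Disjoint (Es i ∪ relInv (Es i)) (Es j ∪ relInv (Es j))) := by
  classical
  letI : LinearOrder X := linearOrderOfSTO WellOrderingRel
  -- the off-diagonal part of F \ E, as a symmetric relation
  set r : X → X → Prop := fun x y => (x, y) ∈ F ∧ (x, y) ∉ E ∧ x ≠ y with hr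
  have hrsymm : Symmetric r := by
    intro x y hxy
    refine ⟨?_, ?_, hxy.2.2.symm⟩
    · rw [← hFsymm]; exact hxy.1
    · intro hE; rw [← hEsymm] at hE; exact hxy.2.1 hE
  set Ed : Set (Sym2 X) := Sym2.fromRel ⟨fun a b h => hrsymm h⟩ with hEd
  -- the line graph on edges of r
  set L : SimpleGraph (Sym2 X) :=
    { Adj := fun e f => e ≠ f ∧ e ∈ Ed ∧ f ∈ Ed ∧ ∃ v, v ∈ e ∧ v ∈ f
      symm := by
        constructor
        rintro e f ⟨h1, h2, h3, v, hv1, hv2⟩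
        exact ⟨h1.symm, h3, h2, v, hv2, hv1⟩
      loopless := ⟨fun e he => he.1 rfl⟩ } with hL
  have hmemEd : ∀ f ∈ Ed, ∀ v ∈ f, ∃ z, f = s(v, z) ∧ r v z := by
    intro f
    induction f using Sym2.ind with
    | _ a b =>
      intro hf v hv
      rw [hEd, Sym2.fromRel_prop] at hf
      rcases Sym2.mem_iff.mp hv with rfl | rfl
      · exact ⟨b, rfl, hf⟩
      · exact ⟨a, Sym2.eq_swap, hrsymm hf⟩
  -- degree bound
  have hdeg : ∀ e, (L.neighborSet e).Finite ∧ (L.neighborSet e).ncard ≤ 2 * M := by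
    intro e
    induction e using Sym2.ind with
    | _ x y =>
      by_cases he : s(x, y) ∈ Ed
      · have hsub : L.neighborSet s(x, y) ⊆
            (fun z => s(x, z)) '' {z | (x, z) ∈ F} ∪ (fun z => s(y, z)) '' {z | (y, z) ∈ F} := by
          rintro f ⟨hne, _, hfEd, v, hv1, hv2⟩
          obtain ⟨z, rfl, hrz⟩ := hmemEd f hfEd v hv2
          rcases Sym2.mem_iff.mp hv1 with rfl | rfl
          · exact Or.inl ⟨z, hrz.1, rfl⟩
          · exact Or.inr ⟨z, hrz.1, rfl⟩
        have hfin : ((fun z => s(x, z)) '' {z | (x, z) ∈ F} ∪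
            (fun z => s(y, z)) '' {z | (y, z) ∈ F}).Finite :=
          ((hbg x).1.image _).union ((hbg y).1.image _)
        refine ⟨hfin.subset hsub, ?_⟩
        calc (L.neighborSet s(x, y)).ncard
            ≤ ((fun z => s(x, z)) '' {z | (x, z) ∈ F} ∪
              (fun z => s(y, z)) '' {z | (y, z) ∈ F}).ncard := Set.ncard_le_ncard hsub hfin
          _ ≤ ((fun z => s(x, z)) '' {z | (x, z) ∈ F}).ncard +
              ((fun z => s(y, z)) '' {z | (y, z) ∈ F}).ncard := Set.ncard_union_le _ _
          _ ≤ M + M := add_le_add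
              ((Set.ncard_image_le (hbg x).1).trans (hbg x).2)
              ((Set.ncard_image_le (hbg y).1).trans (hbg y).2)
          _ = 2 * M := (two_mul M).symm
      · have : L.neighborSet s(x, y) = ∅ := by
          ext f
          simp only [SimpleGraph.mem_neighborSet, Set.mem_empty_iff_false, iff_false]
          rintro ⟨_, h2, _⟩
          exact he h2
        rw [this]
        simp
  -- edge coloring by compactness
  set n : ℕ := 2 * M + 1 with hn
  have hcol : Nonempty (L →g (⊤ : SimpleGraph (Fin n))) := by
    apply nonempty_hom_of_forall_finite_subgraph_hom
    intro G' hfin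
    haveI := hfin.fintype
    have hc : G'.coe.Colorable n := by
      apply greedy_coloring _ _ (Nat.succ_pos _)
      intro v
      have hsub : Subtype.val '' (G'.coe.neighborSet v) ⊆ L.neighborSet v.val := by
        rintro w ⟨w', hw', rfl⟩
        exact G'.adj_sub hw'
      calc (G'.coe.neighborSet v).ncard
          = (Subtype.val '' (G'.coe.neighborSet v)).ncard :=
            (Set.ncard_image_of_injective _ Subtype.val_injective).symm
        _ ≤ (L.neighborSet v.val).ncard := Set.ncard_le_ncard hsub (hdeg _).1
        _ < n := Nat.lt_succ_of_le (hdeg _).2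
    exact hc.some
  obtain ⟨φ⟩ := hcol
  have hφ : ∀ e f, L.Adj e f → φ e ≠ φ f := by
    intro e f hef
    have := φ.map_rel hef
    rwa [SimpleGraph.top_adj] at this
  -- the oriented color classes
  refine ⟨n, fun i => {p | r p.1 p.2 ∧ p.1 < p.2 ∧ φ s(p.1, p.2) = i}, ?_, ?_, ?_, ?_, ?_, ?_, ?_⟩
  -- goal 1: each class is antisymmetric elementary
  · intro i
    have hkey : ∀ x y x' y', r x y → r x' y' → s(x, y) ≠ s(x', y') →
        (x = x' ∨ x = y' ∨ y = x' ∨ y = y') → φ s(x, y) ≠ φ s(x', y') := by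
      intro x y x' y' h1 h2 hne hsh
      apply hφ
      refine ⟨hne, Sym2.fromRel_prop.mpr h1, Sym2.fromRel_prop.mpr h2, ?_⟩
      rcases hsh with rfl | rfl | rfl | rfl
      · exact ⟨x, Sym2.mem_iff.mpr (Or.inl rfl), Sym2.mem_iff.mpr (Or.inl rfl)⟩
      · exact ⟨x, Sym2.mem_iff.mpr (Or.inl rfl), Sym2.mem_iff.mpr (Or.inr rfl)⟩
      · exact ⟨y, Sym2.mem_iff.mpr (Or.inr rfl), Sym2.mem_iff.mpr (Or.inl rfl)⟩
      · exact ⟨y, Sym2.mem_iff.mpr (Or.inr rfl), Sym2.mem_iff.mpr (Or.inr rfl)⟩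
    refine ⟨⟨?_, ?_⟩, ?_⟩
    · rintro ⟨x, y⟩ ⟨hp, hlt, hc⟩ ⟨x', y'⟩ ⟨hq, hlt', hc'⟩ h1
      dsimp only at *
      subst h1
      by_contra hne
      refine hkey _ _ _ _ hp hq ?_ (Or.inl rfl) (hc.trans hc'.symm)
      intro heq
      rcases Sym2.eq_iff.mp heq with ⟨-, h⟩ | ⟨h, -⟩
      · exact hne h
      · subst h
        exact hlt'.false
    · rintro ⟨x, y⟩ ⟨hp, hlt, hc⟩ ⟨x', y'⟩ ⟨hq, hlt', hc'⟩ h2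
      dsimp only at *
      subst h2
      by_contra hne
      refine hkey _ _ _ _ hp hq ?_ (Or.inr (Or.inr (Or.inr rfl))) (hc.trans hc'.symm)
      intro heq
      rcases Sym2.eq_iff.mp heq with ⟨h, -⟩ | ⟨h, -⟩
      · exact hne h
      · subst h
        exact hlt.false
    · rw [Set.disjoint_left]
      rintro v ⟨⟨x, y⟩, ⟨hp, hlt, hc⟩, rfl⟩ ⟨⟨x', y'⟩, ⟨hq, hlt', hc'⟩, hv⟩
      dsimp only at *
      obtain rfl : y' = x := hv
      refine hkey _ _ _ _ hp hq ?_ (Or.inr (Or.inl rfl)) (hc.trans hc'.symm)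
      intro heq
      rcases Sym2.eq_iff.mp heq with ⟨-, h⟩ | ⟨-, h⟩
      · exact hlt.ne h.symm
      · subst h
        exact absurd hlt' (asymm hlt)
  -- goal 2: union decomposition
  · ext p
    simp only [Set.mem_union, Set.mem_iUnion, Set.mem_setOf_eq]
    constructor
    · intro hpF
      by_cases hpE : p ∈ E
      · exact Or.inl (Or.inl hpE)
      by_cases hdiag : p.1 = p.2
      · exact Or.inl (Or.inr ⟨⟨hpF, hpE⟩, hdiag⟩)
      have hpr : r p.1 p.2 := ⟨hpF, hpE, hdiag⟩
      rcases lt_or_gt_of_ne hdiag with hlt | hgt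
      · exact Or.inr ⟨φ s(p.1, p.2), Or.inl ⟨hpr, hlt, rfl⟩⟩
      · exact Or.inr ⟨φ s(p.2, p.1), Or.inr ⟨hrsymm hpr, hgt, rfl⟩⟩
    · rintro ((hpE | ⟨⟨hpF, -⟩, -⟩) | ⟨i, hp | hp⟩)
      · exact hEF hpE
      · exact hpF
      · exact hp.1.1
      · have h2 : (p.2, p.1) ∈ F := hp.1.1
        rw [← hFsymm]
        exact h2
  -- goal 3
  · rw [Set.disjoint_left]
    rintro p hpE ⟨⟨-, hpnE⟩, -⟩
    exact hpnE hpE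
  -- goal 4
  · intro i
    rw [Set.disjoint_left]
    rintro p hpE (hp | hp)
    · exact hp.1.2.1 hpE
    · refine hp.1.2.1 ?_
      rw [← hEsymm] at hpE
      exact hpE
  -- goal 5
  · intro i
    rw [Set.disjoint_left]
    rintro p ⟨-, heq⟩ (hp | hp)
    · exact hp.2.1.ne heq
    · exact hp.2.1.ne heq.symm
  -- goal 6
  · intro i
    rw [Set.disjoint_left]
    rintro p hp hq
    exact absurd hq.2.1 (asymm hp.2.1)
  -- goal 7
  · intro i j hij
    rw [Set.disjoint_left]
    rintro p (hp | hp) (hq | hq)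
    · exact hij (hp.2.2.symm.trans hq.2.2)
    · exact absurd hq.2.1 (asymm hp.2.1)
    · exact absurd hq.2.1 (asymm hp.2.1)
    · exact hij (hp.2.2.symm.trans hq.2.2)
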